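/- Let H be the Hilbert space ℓ² of square-summable complex sequences indexed by ℕ with standard orthonormal basis (e_k), let a : ℤ → ℂ be finitely supported, and let Ha : H → H be a continuous linear operator with matrix entries ⟨Ha e_n, e_m⟩ = a(m+n+1) for all m, n ∈ ℕ. Then Ha has finite rank; in particular, Ha is a compact operator. -/

import Mathlib

noncomputable def lpCoord (m : ℕ) : lp (fun _ : ℕ => ℂ) 2 →L[ℂ] ℂ :=
  LinearMap.mkContinuous
    { toFun := fun f => f m
      map_add' := fun f g => by simp [lp.coeFn_add]
      map_smul' := fun c f => by simp [lp.coeFn_smul] }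
    1 (fun f => by rw [one_mul]; exact lp.norm_apply_le_norm (by norm_num) f m)

theorem hankel_finite_rank_of_finitely_supported
    (a : ℤ → ℂ) (ha : (Function.support a).Finite)
    (Ha : lp (fun _ : ℕ => ℂ) 2 →L[ℂ] lp (fun _ : ℕ => ℂ) 2)
    (hHa : ∀ m n : ℕ, (Ha (lp.single 2 n 1)) m = a ((m : ℤ) + (n : ℤ) + 1)) :
    FiniteDimensional ℂ (LinearMap.range (Ha : lp (fun _ : ℕ => ℂ) 2 →ₗ[ℂ] lp (fun _ : ℕ => ℂ) 2)) ∧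
    IsCompactOperator Ha := by
  classical
  set H := lp (fun _ : ℕ => ℂ) 2
  -- choose N beyond the support
  obtain ⟨N, hN⟩ : ∃ N : ℕ, ∀ k : ℤ, (N : ℤ) ≤ k → a k = 0 := by
    refine ⟨(ha.toFinset.sup fun k => k.toNat) + 1, fun k hk => ?_⟩
    by_contra h
    have hmem : k ∈ ha.toFinset := by simpa using h
    have h1 : k.toNat ≤ ha.toFinset.sup fun k => k.toNat := Finset.le_sup hmem
    have hk0 : (0:ℤ) ≤ k := le_trans (by positivity) hk
    omega
  -- key vanishing property
  have key : ∀ (x : H) (m : ℕ), N ≤ m → (Ha x) m = 0 := by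
    intro x m hm
    have h1 : HasSum (fun n : ℕ => lp.single 2 n (x n)) x :=
      lp.hasSum_single (by norm_num) x
    have h2 : HasSum (fun n : ℕ => (lpCoord m).comp Ha (lp.single 2 n (x n)))
        ((lpCoord m).comp Ha x) := (((lpCoord m).comp Ha).hasSum h1)
    have h3 : ∀ n : ℕ, (lpCoord m).comp Ha (lp.single 2 n (x n)) = 0 := by
      intro n
      have hsingle : (lp.single 2 n (x n) : lp (fun _ : ℕ => ℂ) 2)
          = (x n) • (lp.single 2 n (1 : ℂ) : lp (fun _ : ℕ => ℂ) 2) := by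
        have h := lp.single_smul (E := fun _ : ℕ => ℂ) (𝕜 := ℂ) 2 n (x n) (1 : ℂ)
        rw [smul_eq_mul, mul_one] at h
        exact h
      simp only [ContinuousLinearMap.comp_apply, hsingle, map_smul]
      have : lpCoord m (Ha (lp.single 2 n (1:ℂ))) = a ((m:ℤ) + n + 1) := hHa m n
      rw [smul_eq_mul, this, hN _ (by omega), mul_zero]
    have := h2.unique (show HasSum _ 0 by simpa [h3] using hasSum_zero)
    exact this
  -- the subspace of sequences vanishing from N on
  let S : Submodule ℂ H :=
    { carrier := {f : H | ∀ m : ℕ, N ≤ m → f m = 0}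
      add_mem' := fun {f g} hf hg m hm => by
        simp [lp.coeFn_add, Pi.add_apply, hf m hm, hg m hm]
      zero_mem' := fun m hm => by simp
      smul_mem' := fun c {f} hf m hm => by
        rw [lp.coeFn_smul, Pi.smul_apply, hf m hm, smul_zero] }
  have hSfd : FiniteDimensional ℂ S := by
    have hinj : Function.Injective
        ((LinearMap.pi (fun i : Fin N => (lpCoord i).toLinearMap)).comp S.subtype) := by
      intro f g hfg
      ext m
      by_cases hm : N ≤ m
      · rw [f.2 m hm, g.2 m hm]
      · have := congr_fun hfg ⟨m, by omega⟩
        exact this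
    exact FiniteDimensional.of_injective _ hinj
  have hrange : ∀ x : H, Ha x ∈ S := fun x m hm => key x m hm
  have hle : LinearMap.range (Ha : H →ₗ[ℂ] H) ≤ S := by
    rintro _ ⟨x, rfl⟩; exact hrange x
  refine ⟨Submodule.finiteDimensional_of_le hle, ?_⟩
  -- compactness
  refine ⟨S.subtype '' Metric.closedBall 0 ‖Ha‖, ?_, ?_⟩
  · exact (ProperSpace.isCompact_closedBall _ _).image continuous_subtype_val
  · refine Filter.mem_of_superset (Metric.ball_mem_nhds 0 one_pos) ?_
    intro x hx
    refine ⟨⟨Ha x, hrange x⟩, ?_, rfl⟩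
    simp only [Metric.mem_closedBall, dist_zero_right]
    have hx1 : ‖x‖ ≤ 1 := by
      have := Metric.mem_ball.mp hx
      rw [dist_zero_right] at this
      exact this.le
    calc ‖(⟨Ha x, hrange x⟩ : S)‖ = ‖Ha x‖ := rfl
      _ ≤ ‖Ha‖ * ‖x‖ := Ha.le_opNorm x
      _ ≤ ‖Ha‖ := mul_le_of_le_one_right (norm_nonneg _) hx1
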